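/- Consider the conjugate gradient method applied to f(x) = (1/2)xᵀAx − bᵀx with A symmetric positive semidefinite, started at x⁰ with r⁰ = Ax⁰ − b, p⁰ = −r⁰, terminating when Ap^k = 0. If b ∈ range(A), then the method terminates at some iteration k with 0 ≤ k ≤ rank(A), and the terminating iterate x^k satisfies ∇f(x^k) = 0, i.e., x^k is an optimal solution. -/

import Mathlib

open Matrix

/-- `f(x) = (1/2) xᵀAx − bᵀx`. -/
noncomputable def quadObj {n : ℕ} (A : Matrix (Fin n) (Fin n) ℝ) (b : Fin n → ℝ)
    (x : Fin n → ℝ) : ℝ :=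
  (1 / 2) * (x ⬝ᵥ A.mulVec x) - b ⬝ᵥ x

/-- the CG method applied to a PSD quadratic with `b ∈ range A`
terminates (`A p^k = 0`) at some iteration `k ≤ rank A`, with `∇f(x^k) = A x^k − b = 0`,
i.e. `x^k` optimal. -/
theorem stmt7 {n : ℕ} (A : Matrix (Fin n) (Fin n) ℝ) (b : Fin n → ℝ)
    (hA : A.PosSemidef) (hb : ∃ z, A.mulVec z = b)
    (x r p : ℕ → (Fin n → ℝ))
    (hr0 : r 0 = A.mulVec (x 0) - b)
    (hp0 : p 0 = -r 0)
    (hx : ∀ k, x (k + 1) =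
      x k + ((r k ⬝ᵥ r k) / (p k ⬝ᵥ A.mulVec (p k))) • p k)
    (hr : ∀ k, r (k + 1) =
      r k + ((r k ⬝ᵥ r k) / (p k ⬝ᵥ A.mulVec (p k))) • A.mulVec (p k))
    (hp : ∀ k, p (k + 1) =
      -r (k + 1) + ((r (k + 1) ⬝ᵥ r (k + 1)) / (r k ⬝ᵥ r k)) • p k) :
    ∃ k ≤ A.rank, A.mulVec (p k) = 0 ∧ A.mulVec (x k) - b = 0 ∧
      ∀ y, quadObj A b (x k) ≤ quadObj A b y := by
  classical
  obtain ⟨z, hz⟩ := hb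
  have hAt : Aᵀ = A := hA.1
  -- symmetry of the bilinear form
  have hsym : ∀ u v : Fin n → ℝ, u ⬝ᵥ A.mulVec v = v ⬝ᵥ A.mulVec u := by
    intro u v
    rw [dotProduct_mulVec, ← hAt, vecMul_transpose, dotProduct_comm, hAt]
  -- consistency r k = A x k - b
  have hcons : ∀ k, r k = A.mulVec (x k) - b := by
    intro k
    induction k with
    | zero => exact hr0
    | succ m ih =>
      rw [hr m, hx m, ih, mulVec_add, mulVec_smul]
      abel
  -- residuals and directions lie in the range of A
  have hrange_r : ∀ k, ∃ w, A.mulVec w = r k := by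
    intro k
    induction k with
    | zero => exact ⟨x 0 - z, by rw [mulVec_sub, hz, hr0]⟩
    | succ m ih =>
      obtain ⟨w, hw⟩ := ih
      exact ⟨w + ((r m ⬝ᵥ r m) / (p m ⬝ᵥ A.mulVec (p m))) • p m,
        by rw [hr m, mulVec_add, mulVec_smul, hw]⟩
  have hrange_p : ∀ k, ∃ w, A.mulVec w = p k := by
    intro k
    induction k with
    | zero =>
      obtain ⟨w, hw⟩ := hrange_r 0
      exact ⟨-w, by rw [mulVec_neg, hw, hp0]⟩
    | succ m ih =>
      obtain ⟨w, hw⟩ := ih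
      obtain ⟨w', hw'⟩ := hrange_r (m + 1)
      exact ⟨-w' + ((r (m+1) ⬝ᵥ r (m+1)) / (r m ⬝ᵥ r m)) • w,
        by rw [hp m, mulVec_add, mulVec_smul, mulVec_neg, hw, hw']⟩
  -- kernel ∩ range = 0
  have hker : ∀ v : Fin n → ℝ, (∃ w, A.mulVec w = v) → A.mulVec v = 0 → v = 0 := by
    rintro v ⟨w, rfl⟩ h0
    rw [← dotProduct_self_eq_zero (v := A.mulVec w), hsym, h0, dotProduct_zero]
  -- zero quadratic form implies in kernel
  have hD0 : ∀ v : Fin n → ℝ, v ⬝ᵥ A.mulVec v = 0 → A.mulVec v = 0 := by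
    intro v h0
    exact (hA.dotProduct_mulVec_zero_iff v).mp (by simpa using h0)
  -- the invariant
  set Inv : ℕ → Prop := fun k =>
    (∀ j < k, p j ⬝ᵥ A.mulVec (p k) = 0) ∧
    (∀ j < k, r j ⬝ᵥ r k = 0) ∧
    (∀ j < k, p j ⬝ᵥ r k = 0) ∧
    p k ⬝ᵥ r k = -(r k ⬝ᵥ r k) with hInvDef
  have hInv : ∀ k, (∀ j, j < k → r j ≠ 0) → Inv k := by
    intro k
    induction k using Nat.strong_induction_on with
    | _ k IH =>
      intro hne
      match k with
      | 0 =>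
        refine ⟨fun j hj => absurd hj (Nat.not_lt_zero j),
          fun j hj => absurd hj (Nat.not_lt_zero j),
          fun j hj => absurd hj (Nat.not_lt_zero j), ?_⟩
        rw [hp0, neg_dotProduct]
      | m + 1 =>
        have hInvLe : ∀ j, j ≤ m → Inv j := fun j hj =>
          IH j (Nat.lt_succ_of_le hj) (fun i hi => hne i (hi.trans_le (Nat.lt_succ_of_le hj).le))
        have hrne : ∀ j, j ≤ m → r j ≠ 0 := fun j hj => hne j (Nat.lt_succ_of_le hj)
        have hrr : ∀ j, j ≤ m → r j ⬝ᵥ r j ≠ 0 := fun j hj =>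
          fun h0 => hrne j hj (dotProduct_self_eq_zero.mp h0)
        have hDne : ∀ j, j ≤ m → p j ⬝ᵥ A.mulVec (p j) ≠ 0 := by
          intro j hj h0
          have hp0' : p j = 0 := hker _ (hrange_p j) (hD0 _ h0)
          have := (hInvLe j hj).2.2.2
          rw [hp0', zero_dotProduct] at this
          exact hrr j hj (by linarith)
        -- (a) p j ⬝ᵥ r (m+1) = 0 for j ≤ m
        have ha : ∀ j, j ≤ m → p j ⬝ᵥ r (m + 1) = 0 := by
          intro j hj
          rw [hr m, dotProduct_add, dotProduct_smul, smul_eq_mul]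
          rcases eq_or_lt_of_le hj with rfl | hjm
          · rw [(hInvLe j le_rfl).2.2.2, hsym, div_mul_cancel₀ _ (hDne j le_rfl)]
            ring
          · rw [(hInvLe m le_rfl).2.2.1 j hjm, hsym,
              (hInvLe m le_rfl).1 j hjm, mul_zero, add_zero]
        -- (b) r j ⬝ᵥ r (m+1) = 0 for j ≤ m
        have hb' : ∀ j, j ≤ m → r j ⬝ᵥ r (m + 1) = 0 := by
          intro j hj
          match j with
          | 0 =>
            have : r 0 = -p 0 := by rw [hp0, neg_neg]
            rw [this, neg_dotProduct, ha 0 hj, neg_zero]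
          | i + 1 =>
            have hri : r (i + 1) = -p (i + 1) +
                ((r (i+1) ⬝ᵥ r (i+1)) / (r i ⬝ᵥ r i)) • p i := by
              rw [hp i]; abel
            rw [hri, add_dotProduct, neg_dotProduct, smul_dotProduct, smul_eq_mul,
              ha (i+1) hj, ha i (Nat.le_of_succ_le hj), neg_zero, mul_zero, add_zero]
        -- α j * (u ⬝ᵥ A p j) = u ⬝ᵥ r (j+1) - u ⬝ᵥ r j
        have hApj : ∀ j, ∀ u : Fin n → ℝ,
            ((r j ⬝ᵥ r j) / (p j ⬝ᵥ A.mulVec (p j))) * (u ⬝ᵥ A.mulVec (p j)) =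
              u ⬝ᵥ r (j + 1) - u ⬝ᵥ r j := by
          intro j u
          rw [hr j, dotProduct_add, dotProduct_smul, smul_eq_mul]
          ring
        -- (c) conjugacy
        have hc : ∀ j, j ≤ m → p j ⬝ᵥ A.mulVec (p (m + 1)) = 0 := by
          intro j hj
          have hswap : p j ⬝ᵥ A.mulVec (p (m + 1)) = p (m+1) ⬝ᵥ A.mulVec (p j) := hsym _ _
          have hexp : p (m + 1) ⬝ᵥ A.mulVec (p j) =
              -(r (m+1) ⬝ᵥ A.mulVec (p j)) +
              ((r (m+1) ⬝ᵥ r (m+1)) / (r m ⬝ᵥ r m)) * (p m ⬝ᵥ A.mulVec (p j)) := by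
            rw [hp m, add_dotProduct, neg_dotProduct, smul_dotProduct, smul_eq_mul]
          rcases eq_or_lt_of_le hj with heq | hjm
          · -- j = m
            subst heq
            have h2 : ((r j ⬝ᵥ r j) / (p j ⬝ᵥ A.mulVec (p j))) *
                (r (j+1) ⬝ᵥ A.mulVec (p j)) = r (j+1) ⬝ᵥ r (j+1) := by
              rw [hApj j (r (j+1)), dotProduct_comm (r (j+1)) (r j), hb' j le_rfl, sub_zero]
            rw [hswap, hexp]
            have hD := hDne j le_rfl
            have hR := hrr j le_rfl
            field_simp at h2 ⊢
            nlinarith [h2]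
          · -- j < m
            have h1' : ((r j ⬝ᵥ r j) / (p j ⬝ᵥ A.mulVec (p j))) *
                (r (m+1) ⬝ᵥ A.mulVec (p j)) = 0 := by
              rw [hApj j (r (m+1)), dotProduct_comm (r (m+1)) (r (j+1)),
                dotProduct_comm (r (m+1)) (r j), hb' (j+1) hjm, hb' j hjm.le]
              ring
            have hα : (r j ⬝ᵥ r j) / (p j ⬝ᵥ A.mulVec (p j)) ≠ 0 :=
              div_ne_zero (hrr j hj) (hDne j hj)
            have h2 : r (m+1) ⬝ᵥ A.mulVec (p j) = 0 :=
              by rcases mul_eq_zero.mp h1' with h | h; exact absurd h hα; exact h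
            rw [hswap, hexp, h2, hsym (p m) (p j), (hInvLe m le_rfl).1 j hjm]
            ring
        -- (d)
        have hd : p (m+1) ⬝ᵥ r (m+1) = -(r (m+1) ⬝ᵥ r (m+1)) := by
          rw [hp m, add_dotProduct, neg_dotProduct, smul_dotProduct, smul_eq_mul,
            ha m le_rfl, mul_zero, add_zero]
        exact ⟨fun j hj => hc j (Nat.lt_succ_iff.mp hj),
          fun j hj => hb' j (Nat.lt_succ_iff.mp hj),
          fun j hj => ha j (Nat.lt_succ_iff.mp hj), hd⟩
  -- there is a zero residual with index ≤ rank
  have hex : ∃ k, k ≤ A.rank ∧ r k = 0 := by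
    by_contra hcon
    push_neg at hcon
    set v : Fin (A.rank + 1) → (Fin n → ℝ) := fun i => r i with hv
    have horth : ∀ i j : Fin (A.rank + 1), i ≠ j → v i ⬝ᵥ v j = 0 := by
      intro i j hij
      have key : ∀ a b : ℕ, a < b → b ≤ A.rank → r a ⬝ᵥ r b = 0 := by
        intro a b hab hbr
        exact (hInv b (fun l hl => hcon l (hl.le.trans hbr))).2.1 a hab
      rcases lt_or_gt_of_ne hij with h | h
      · exact key i j h (Nat.lt_succ_iff.mp j.isLt)
      · rw [dotProduct_comm]
        exact key j i h (Nat.lt_succ_iff.mp i.isLt)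
    have hvne : ∀ i : Fin (A.rank + 1), v i ≠ 0 := fun i =>
      hcon i (Nat.lt_succ_iff.mp i.isLt)
    have hli : LinearIndependent ℝ v := by
      rw [linearIndependent_iff']
      intro s g hsum i hi
      have h0 : (∑ j ∈ s, g j • v j) ⬝ᵥ v i = 0 := by rw [hsum, zero_dotProduct]
      have hexpand : (∑ j ∈ s, g j • v j) ⬝ᵥ v i = ∑ j ∈ s, g j * (v j ⬝ᵥ v i) := by
        simp only [dotProduct, Finset.sum_apply, Pi.smul_apply, smul_eq_mul, Finset.sum_mul,
          Finset.mul_sum]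
        rw [Finset.sum_comm]
        exact Finset.sum_congr rfl fun j _ => Finset.sum_congr rfl fun l _ => by ring
      rw [hexpand] at h0
      rw [Finset.sum_eq_single i (fun j _ hji => by rw [horth j i hji, mul_zero])
        (fun h => absurd hi h)] at h0
      rcases mul_eq_zero.mp h0 with h | h
      · exact h
      · exact absurd (dotProduct_self_eq_zero.mp h) (hvne i)
    have hmem : ∀ i, v i ∈ LinearMap.range A.mulVecLin := by
      intro i
      obtain ⟨w, hw⟩ := hrange_r i
      exact ⟨w, by simpa [mulVecLin_apply] using hw⟩
    set v' : Fin (A.rank + 1) → LinearMap.range A.mulVecLin := fun i => ⟨v i, hmem i⟩ with hv'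
    have hli' : LinearIndependent ℝ v' := by
      apply LinearIndependent.of_comp (LinearMap.range A.mulVecLin).subtype
      exact hli
    have := hli'.fintype_card_le_finrank
    rw [Fintype.card_fin] at this
    rw [Matrix.rank] at this
    omega
  obtain ⟨k0, hk0r, hk0⟩ := hex
  have hexist : ∃ k, r k = 0 := ⟨k0, hk0⟩
  set k := Nat.find hexist with hkdef
  have hrk : r k = 0 := Nat.find_spec hexist
  have hkle : k ≤ A.rank := (Nat.find_le hk0).trans hk0r
  have hpk : p k = 0 := by
    cases hk' : k with
    | zero =>
      have h0 : r 0 = 0 := hk' ▸ hrk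
      rw [hp0, h0, neg_zero]
    | succ i =>
      have h0 : r (i + 1) = 0 := hk' ▸ hrk
      rw [hp i, h0, dotProduct_zero, zero_div, zero_smul, neg_zero, add_zero]
  refine ⟨k, hkle, by rw [hpk, mulVec_zero], ?_, ?_⟩
  · rw [← hcons k, hrk]
  · intro y
    have hbx : A.mulVec (x k) = b := by
      have := hcons k
      rw [hrk] at this
      exact (sub_eq_zero.mp this.symm)
    have hpsd := hA.dotProduct_mulVec_nonneg (y - x k)
    rw [star_trivial] at hpsd
    have hexp : (y - x k) ⬝ᵥ A.mulVec (y - x k) =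
        y ⬝ᵥ A.mulVec y - y ⬝ᵥ A.mulVec (x k) - x k ⬝ᵥ A.mulVec y
          + x k ⬝ᵥ A.mulVec (x k) := by
      rw [mulVec_sub, dotProduct_sub, sub_dotProduct, sub_dotProduct]
      ring
    have h1 : b ⬝ᵥ y = x k ⬝ᵥ A.mulVec y := by
      rw [← hbx, dotProduct_comm, hsym]
    have h2 : b ⬝ᵥ x k = x k ⬝ᵥ A.mulVec (x k) := by
      rw [← hbx, dotProduct_comm, hsym]
    have h3 : y ⬝ᵥ A.mulVec (x k) = x k ⬝ᵥ A.mulVec y := hsym _ _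
    unfold quadObj
    rw [h1, h2]
    nlinarith [hpsd, hexp, h3]
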